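/- For γ_k(p) := Γ(1/p) Γ(1/q + k/2) / (Γ(1/q) Γ(1/p + k/2)) with 2 ≤ p < ∞, 1/p + 1/q = 1, the submultiplicativity γ_{k+l}(p) ≤ γ_k(p) γ_l(p) holds for all positive integers k, l. -/

import Mathlib

open Real MeasureTheory Set

private lemma betaIntegrableOn {x y : ℝ} (hx : 0 < x) (hy : 0 < y) :
    IntegrableOn (fun t : ℝ => t ^ (x - 1) * (1 - t) ^ (y - 1)) (Ioo 0 1) volume := by
  have h := (Complex.betaIntegral_convergent (u := x) (v := y) (by simpa) (by simpa)).norm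
  rw [intervalIntegrable_iff_integrableOn_Ioc_of_le zero_le_one,
    integrableOn_Ioc_iff_integrableOn_Ioo] at h
  refine h.congr_fun (fun t ht => ?_) measurableSet_Ioo
  obtain ⟨ht0, ht1⟩ := ht
  have h1t : (0:ℝ) < 1 - t := by linarith
  beta_reduce
  rw [norm_mul,
    show (1 : ℂ) - (t : ℂ) = ((1 - t : ℝ) : ℂ) by push_cast; ring,
    Complex.norm_cpow_eq_rpow_re_of_pos ht0, Complex.norm_cpow_eq_rpow_re_of_pos h1t]
  norm_num

private lemma betaIntegral_real {x y : ℝ} (hx : 0 < x) (hy : 0 < y) :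
    ∫ t in Ioo (0:ℝ) 1, t ^ (x - 1) * (1 - t) ^ (y - 1) =
      Gamma x * Gamma y / Gamma (x + y) := by
  have h1 : ((∫ t in (0:ℝ)..1, t ^ (x - 1) * (1 - t) ^ (y - 1) : ℝ) : ℂ) =
      Complex.betaIntegral x y := by
    rw [← intervalIntegral.integral_ofReal, Complex.betaIntegral]
    refine intervalIntegral.integral_congr fun t ht => ?_
    rw [uIcc_of_le zero_le_one] at ht
    obtain ⟨ht0, ht1⟩ := ht
    rw [Complex.ofReal_mul, Complex.ofReal_cpow ht0, Complex.ofReal_cpow (by linarith)]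
    push_cast
    ring
  have h2 := Complex.Gamma_mul_Gamma_eq_betaIntegral
    (s := (x:ℂ)) (t := (y:ℂ)) (by simpa) (by simpa)
  rw [← h1, ← Complex.ofReal_add, Complex.Gamma_ofReal, Complex.Gamma_ofReal,
    Complex.Gamma_ofReal, ← Complex.ofReal_mul, ← Complex.ofReal_mul] at h2
  have h3 : Gamma x * Gamma y = Gamma (x + y) * ∫ t in (0:ℝ)..1, t ^ (x-1) * (1-t) ^ (y-1) := by
    exact_mod_cast h2
  have h4 : Gamma (x + y) ≠ 0 := (Real.Gamma_pos_of_pos (by linarith)).ne'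
  rw [intervalIntegral.integral_of_le zero_le_one, integral_Ioc_eq_integral_Ioo] at h3
  field_simp [h3]
  rw [h3]; ring

private noncomputable def betaI (a c r : ℝ) : ℝ :=
  ∫ x in Ioo (0:ℝ) 1, x ^ (a + r - 1) * (1 - x) ^ (c - 1)

private lemma betaI_eq {a c r : ℝ} (har : 0 < a + r) (hc : 0 < c) :
    betaI a c r = Gamma (a + r) * Gamma c / Gamma (a + r + c) :=
  betaIntegral_real har hc

private lemma betaI_cheb {a c s t : ℝ} (ha : 0 < a) (hc : 0 < c) (hs : 0 ≤ s) (ht : 0 ≤ t) :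
    betaI a c s * betaI a c t ≤ betaI a c 0 * betaI a c (s + t) := by
  set μ := volume.restrict (Ioo (0:ℝ) 1) with hμ
  set φ : ℝ → ℝ → ℝ := fun r x => x ^ (a + r - 1) * (1 - x) ^ (c - 1) with hφ
  have hint : ∀ r : ℝ, 0 ≤ r → Integrable (φ r) μ := fun r hr =>
    betaIntegrableOn (x := a + r) (by linarith) hc
  have hI : ∀ r : ℝ, betaI a c r = ∫ x, φ r x ∂μ := fun r => rfl
  have hprod : ∀ r₁ r₂ : ℝ, 0 ≤ r₁ → 0 ≤ r₂ →
      Integrable (fun z : ℝ × ℝ => φ r₁ z.1 * φ r₂ z.2) (μ.prod μ) := fun r₁ r₂ h1 h2 =>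
    (hint r₁ h1).mul_prod (hint r₂ h2)
  have hst : 0 ≤ s + t := by linarith
  have hnn : 0 ≤ ∫ z : ℝ × ℝ, (φ 0 z.1 * φ (s+t) z.2 + φ (s+t) z.1 * φ 0 z.2
      - (φ s z.1 * φ t z.2 + φ t z.1 * φ s z.2)) ∂(μ.prod μ) := by
    refine integral_nonneg_of_ae ?_
    have hae : ∀ᵐ z : ℝ × ℝ ∂(μ.prod μ), z ∈ (Ioo (0:ℝ) 1) ×ˢ (Ioo (0:ℝ) 1) := by
      rw [hμ, Measure.prod_restrict]
      exact ae_restrict_mem (measurableSet_Ioo.prod measurableSet_Ioo)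
    filter_upwards [hae] with z hz
    obtain ⟨⟨hx0, hx1⟩, hy0, hy1⟩ := hz
    have key : φ 0 z.1 * φ (s+t) z.2 + φ (s+t) z.1 * φ 0 z.2
        - (φ s z.1 * φ t z.2 + φ t z.1 * φ s z.2)
        = (z.1 ^ (a-1) * (1-z.1) ^ (c-1)) * (z.2 ^ (a-1) * (1-z.2) ^ (c-1)) *
          ((z.1 ^ s - z.2 ^ s) * (z.1 ^ t - z.2 ^ t)) := by
      have e1 : ∀ r : ℝ, z.1 ^ (a + r - 1) = z.1 ^ (a-1) * z.1 ^ r := fun r => by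
        rw [show a + r - 1 = (a - 1) + r by ring, Real.rpow_add hx0]
      have e2 : ∀ r : ℝ, z.2 ^ (a + r - 1) = z.2 ^ (a-1) * z.2 ^ r := fun r => by
        rw [show a + r - 1 = (a - 1) + r by ring, Real.rpow_add hy0]
      have e3 : z.1 ^ (s + t) = z.1 ^ s * z.1 ^ t := Real.rpow_add hx0 s t
      have e4 : z.2 ^ (s + t) = z.2 ^ s * z.2 ^ t := Real.rpow_add hy0 s t
      simp only [hφ, e1, e2, e3, e4, Real.rpow_zero]
      ring
    rw [key]
    have h1 : (0:ℝ) ≤ (z.1 ^ (a-1) * (1-z.1) ^ (c-1)) * (z.2 ^ (a-1) * (1-z.2) ^ (c-1)) := by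
      apply mul_nonneg <;> apply mul_nonneg <;> apply Real.rpow_nonneg <;> linarith
    refine mul_nonneg h1 ?_
    rcases le_total z.1 z.2 with h | h
    · have u1 : z.1 ^ s - z.2 ^ s ≤ 0 := by
        have := Real.rpow_le_rpow hx0.le h hs; linarith
      have u2 : z.1 ^ t - z.2 ^ t ≤ 0 := by
        have := Real.rpow_le_rpow hx0.le h ht; linarith
      have := mul_nonneg (neg_nonneg.2 u1) (neg_nonneg.2 u2)
      rwa [neg_mul_neg] at this
    · have u1 : 0 ≤ z.1 ^ s - z.2 ^ s := by
        have := Real.rpow_le_rpow hy0.le h hs; linarith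
      have u2 : 0 ≤ z.1 ^ t - z.2 ^ t := by
        have := Real.rpow_le_rpow hy0.le h ht; linarith
      exact mul_nonneg u1 u2
  have hsplit : ∫ z : ℝ × ℝ, (φ 0 z.1 * φ (s+t) z.2 + φ (s+t) z.1 * φ 0 z.2
      - (φ s z.1 * φ t z.2 + φ t z.1 * φ s z.2)) ∂(μ.prod μ)
      = (betaI a c 0 * betaI a c (s+t) + betaI a c (s+t) * betaI a c 0)
        - (betaI a c s * betaI a c t + betaI a c t * betaI a c s) := by
    have i1 : Integrable (fun z : ℝ × ℝ => φ 0 z.1 * φ (s+t) z.2 + φ (s+t) z.1 * φ 0 z.2)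
        (μ.prod μ) := (hprod 0 (s+t) le_rfl hst).add (hprod (s+t) 0 hst le_rfl)
    have i2 : Integrable (fun z : ℝ × ℝ => φ s z.1 * φ t z.2 + φ t z.1 * φ s z.2)
        (μ.prod μ) := (hprod s t hs ht).add (hprod t s ht hs)
    rw [integral_sub i1 i2,
      integral_add (hprod 0 (s+t) le_rfl hst) (hprod (s+t) 0 hst le_rfl),
      integral_add (hprod s t hs ht) (hprod t s ht hs),
      integral_prod_mul, integral_prod_mul, integral_prod_mul, integral_prod_mul]
    simp only [hI]
  rw [hsplit] at hnn
  nlinarith [hnn]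

private lemma gamma_four {a b s t : ℝ} (ha : 0 < a) (hab : a ≤ b) (hs : 0 ≤ s) (ht : 0 ≤ t) :
    Gamma (b + (s + t)) * Gamma (a + s) * Gamma (a + t) * Gamma b ≤
      Gamma (a + (s + t)) * Gamma (b + s) * Gamma (b + t) * Gamma a := by
  rcases eq_or_lt_of_le hab with rfl | hlt
  · exact le_of_eq (by ring)
  · set c := b - a with hcdef
    have hc : 0 < c := by simp [hcdef]; linarith
    have hb : b = a + c := by rw [hcdef]; ring
    have key := betaI_cheb ha hc hs ht
    rw [betaI_eq (by linarith) hc, betaI_eq (by linarith) hc,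
      betaI_eq (by linarith) hc, betaI_eq (by linarith) hc] at key
    rw [show a + s + c = b + s by rw [hb]; ring, show a + t + c = b + t by rw [hb]; ring,
      show a + (s + t) + c = b + (s + t) by rw [hb]; ring,
      show a + (0:ℝ) + c = b by rw [hb]; ring, show a + (0:ℝ) = a by ring] at key
    have pb : 0 < Gamma b := Real.Gamma_pos_of_pos (by linarith)
    have pbs : 0 < Gamma (b + s) := Real.Gamma_pos_of_pos (by linarith)
    have pbt : 0 < Gamma (b + t) := Real.Gamma_pos_of_pos (by linarith)
    have pbst : 0 < Gamma (b + (s + t)) := Real.Gamma_pos_of_pos (by linarith)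
    have pc : 0 < Gamma c := Real.Gamma_pos_of_pos hc
    rw [div_mul_div_comm, div_mul_div_comm,
      div_le_div_iff₀ (by positivity) (by positivity)] at key
    have h2 : (Gamma (b + (s + t)) * Gamma (a + s) * Gamma (a + t) * Gamma b)
          * (Gamma c * Gamma c)
        ≤ (Gamma (a + (s + t)) * Gamma (b + s) * Gamma (b + t) * Gamma a)
          * (Gamma c * Gamma c) := by
      calc (Gamma (b + (s + t)) * Gamma (a + s) * Gamma (a + t) * Gamma b)
            * (Gamma c * Gamma c)
          = Gamma (a + s) * Gamma c * (Gamma (a + t) * Gamma c)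
            * (Gamma b * Gamma (b + (s + t))) := by ring
        _ ≤ Gamma a * Gamma c * (Gamma (a + (s + t)) * Gamma c)
            * (Gamma (b + s) * Gamma (b + t)) := key
        _ = (Gamma (a + (s + t)) * Gamma (b + s) * Gamma (b + t) * Gamma a)
            * (Gamma c * Gamma c) := by ring
    exact le_of_mul_le_mul_right h2 (by positivity)

theorem gammaRatio_submultiplicative (p : ℝ) (hp : 2 ≤ p) (k l : ℕ) (hk : 1 ≤ k) (hl : 1 ≤ l) :
    Real.Gamma (1 / p) * Real.Gamma ((1 - 1 / p) + (k + l : ℝ) / 2) /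
        (Real.Gamma (1 - 1 / p) * Real.Gamma (1 / p + (k + l : ℝ) / 2)) ≤
      (Real.Gamma (1 / p) * Real.Gamma ((1 - 1 / p) + (k : ℝ) / 2) /
          (Real.Gamma (1 - 1 / p) * Real.Gamma (1 / p + (k : ℝ) / 2))) *
        (Real.Gamma (1 / p) * Real.Gamma ((1 - 1 / p) + (l : ℝ) / 2) /
          (Real.Gamma (1 - 1 / p) * Real.Gamma (1 / p + (l : ℝ) / 2))) := by
  have hp0 : 0 < p := by linarith
  set a := 1 / p with hadef
  set b := 1 - 1 / p with hbdef
  have ha : 0 < a := by positivity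
  have ha2 : a ≤ 1 / 2 := by
    rw [hadef, div_le_div_iff₀ hp0 two_pos]; linarith
  have hab : a ≤ b := by rw [hbdef]; linarith
  have hb : 0 < b := by linarith
  set s := (k : ℝ) / 2 with hsdef
  set t := (l : ℝ) / 2 with htdef
  have hs : 0 ≤ s := by positivity
  have ht : 0 ≤ t := by positivity
  have hkl : ((k : ℝ) + (l : ℝ)) / 2 = s + t := by rw [hsdef, htdef]; ring
  rw [hkl]
  have gf := gamma_four ha hab hs ht
  have pa : 0 < Gamma a := Real.Gamma_pos_of_pos ha
  have pb : 0 < Gamma b := Real.Gamma_pos_of_pos hb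
  have pas : 0 < Gamma (a + s) := Real.Gamma_pos_of_pos (by linarith)
  have pat : 0 < Gamma (a + t) := Real.Gamma_pos_of_pos (by linarith)
  have past : 0 < Gamma (a + (s + t)) := Real.Gamma_pos_of_pos (by linarith)
  have pbs : 0 < Gamma (b + s) := Real.Gamma_pos_of_pos (by linarith)
  have pbt : 0 < Gamma (b + t) := Real.Gamma_pos_of_pos (by linarith)
  have pbst : 0 < Gamma (b + (s + t)) := Real.Gamma_pos_of_pos (by linarith)
  rw [div_mul_div_comm, div_le_div_iff₀ (by positivity) (by positivity)]
  have h3 := mul_le_mul_of_nonneg_left gf (le_of_lt (mul_pos pa pb))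
  calc Gamma a * Gamma (b + (s + t)) * (Gamma b * Gamma (a + s) * (Gamma b * Gamma (a + t)))
      = Gamma a * Gamma b *
        (Gamma (b + (s + t)) * Gamma (a + s) * Gamma (a + t) * Gamma b) := by ring
    _ ≤ Gamma a * Gamma b *
        (Gamma (a + (s + t)) * Gamma (b + s) * Gamma (b + t) * Gamma a) := h3
    _ = Gamma a * Gamma (b + s) * (Gamma a * Gamma (b + t)) *
        (Gamma b * Gamma (a + (s + t))) := by ring
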